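/- Let n ≥ 0 be even, d ≥ 2, let ζ ∈ ℂ be a primitive 2d-th root of unity, and let α_0, α_2, …, α_n be odd integers in {1, 3, …, 2d−1}. For j = 1, …, n/2 + 1 define f_j := x_{2j−2} − ζ^{α_{2j−2}} x_{2j−1} and g_j := Σ_{l=0}^{d−1} x_{2j−2}^{d−1−l} ζ^{α_{2j−2} l} x_{2j−1}^{l} in ℂ[x_0, …, x_{n+1}]. Then: (a) Σ_{j=1}^{n/2+1} f_j g_j = x_0^d + x_1^d + ⋯ + x_{n+1}^d; and (b) the determinant of the (n+2)×(n+2) Jacobian matrix Jac(H) of H := (f_1, g_1, f_2, g_2, …, f_{n/2+1}, g_{n/2+1}) with respect to x_0, …, x_{n+1} equals d^{n/2+1} · ζ^{α_0 + α_2 + ⋯ + α_n} · Π_{j=1}^{n/2+1} ( Σ_{l=0}^{d−2} x_{2j−2}^{d−2−l} ζ^{α_{2j−2} l} x_{2j−1}^{l} ). -/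

import Mathlib

open MvPolynomial
open Fin.NatCast

/-- The Jacobian matrix `(∂f_i/∂x_j)` of a tuple of polynomials. -/
noncomputable def jacMatrix {N : ℕ} (f : Fin N → MvPolynomial (Fin N) ℂ) :
    Matrix (Fin N) (Fin N) (MvPolynomial (Fin N) ℂ) :=
  fun i j => MvPolynomial.pderiv j (f i)

section aux

open Finset

lemma fermatAux_telescope {R : Type*} [CommRing R] (x y c : R) (d : ℕ) :
    (x - c * y) * ∑ l ∈ range d, x ^ (d - 1 - l) * c ^ l * y ^ l
      = x ^ d - c ^ d * y ^ d := by
  rw [Finset.mul_sum]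
  have : ∀ l ∈ range d, (x - c * y) * (x ^ (d-1-l) * c ^ l * y ^ l)
      = (fun l => x ^ (d - l) * c ^ l * y ^ l) l
        - (fun l => x ^ (d - l) * c ^ l * y ^ l) (l + 1) := by
    intro l hl
    simp only [Finset.mem_range] at hl
    have h1 : d - l = (d - 1 - l) + 1 := by omega
    have h2 : d - (l + 1) = d - 1 - l := by omega
    simp only [h1, h2]
    ring
  rw [Finset.sum_congr rfl this, Finset.sum_range_sub']
  simp

lemma fermatAux_key {R : Type*} [CommRing R] (x y c : R) (d : ℕ) (hd : 2 ≤ d) :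
    (∑ l ∈ range d, x ^ (d - 1 - l) * c ^ l * ((l : R) * y ^ (l - 1)))
      + c * ∑ l ∈ range d, ((d - 1 - l : ℕ) : R) * x ^ (d - 2 - l) * c ^ l * y ^ l
      = (d : R) * c * ∑ l ∈ range (d - 1), x ^ (d - 2 - l) * c ^ l * y ^ l := by
  obtain ⟨e, rfl⟩ : ∃ e, d = e + 2 := ⟨d - 2, by omega⟩
  rw [Finset.sum_range_succ' (fun l => x ^ (e + 2 - 1 - l) * c ^ l * ((l:R) * y ^ (l-1)))]
  rw [Finset.sum_range_succ (fun l => ((e + 2 - 1 - l : ℕ) : R) * x ^ (e + 2 - 2 - l) * c ^ l * y ^ l)]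
  simp only [Nat.cast_zero, Nat.sub_self, Nat.cast_ofNat, Nat.add_sub_cancel]
  have h0 : e + 2 - 1 - (e + 1) = 0 := by omega
  rw [h0]
  simp only [Nat.cast_zero, zero_mul, mul_zero, add_zero, zero_add, mul_add, Finset.mul_sum]
  rw [← Finset.sum_add_distrib]
  have h1 : e + 2 - 1 = e + 1 := by omega
  rw [h1]
  apply Finset.sum_congr rfl
  intro l hl
  simp only [Finset.mem_range] at hl
  have h5 : ((e + 1 - l : ℕ) : R) = (e : R) + 1 - (l : R) := by
    push_cast [Nat.cast_sub (by omega : l ≤ e + 1)]; ring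
  rw [h5]
  push_cast
  ring

variable {N : ℕ}

lemma fermatAux_pd_F (a b k : Fin N) (c : ℂ) (hab : a ≠ b) :
    pderiv k (X a - C c * X b : MvPolynomial (Fin N) ℂ)
      = (if k = a then 1 else 0) - C c * (if k = b then 1 else 0) := by
  classical
  rw [map_sub, pderiv_C_mul]
  by_cases h1 : k = a <;> by_cases h2 : k = b <;>
    simp_all [pderiv_X_self, pderiv_X_of_ne, Ne.symm]

lemma fermatAux_pd_G_a (a b : Fin N) (c : ℂ) (d : ℕ) (hab : a ≠ b) :
    pderiv a (∑ l ∈ range d, X a ^ (d-1-l) * C (c^l) * X b ^ l : MvPolynomial (Fin N) ℂ)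
      = ∑ l ∈ range d, ((d-1-l : ℕ) : MvPolynomial (Fin N) ℂ) * X a ^ (d-2-l) * C (c^l) * X b ^ l := by
  rw [map_sum]
  apply Finset.sum_congr rfl
  intro l hl
  rw [pderiv_mul, pderiv_mul, pderiv_pow, pderiv_pow, pderiv_X_self, pderiv_X_of_ne hab.symm,
    pderiv_C]
  have : d - 1 - l - 1 = d - 2 - l := by omega
  rw [this]
  ring

lemma fermatAux_pd_G_b (a b : Fin N) (c : ℂ) (d : ℕ) (hab : a ≠ b) :
    pderiv b (∑ l ∈ range d, X a ^ (d-1-l) * C (c^l) * X b ^ l : MvPolynomial (Fin N) ℂ)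
      = ∑ l ∈ range d, X a ^ (d-1-l) * C (c^l) * ((l : MvPolynomial (Fin N) ℂ) * X b ^ (l-1)) := by
  rw [map_sum]
  apply Finset.sum_congr rfl
  intro l hl
  rw [pderiv_mul, pderiv_mul, pderiv_pow, pderiv_pow, pderiv_X_self, pderiv_X_of_ne hab,
    pderiv_C]
  ring

lemma fermatAux_pd_G_ne (a b k : Fin N) (c : ℂ) (d : ℕ) (hka : k ≠ a) (hkb : k ≠ b) :
    pderiv k (∑ l ∈ range d, X a ^ (d-1-l) * C (c^l) * X b ^ l : MvPolynomial (Fin N) ℂ) = 0 := by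
  rw [map_sum]
  apply Finset.sum_eq_zero
  intro l hl
  rw [pderiv_mul, pderiv_mul, pderiv_pow, pderiv_pow, pderiv_X_of_ne hka.symm,
    pderiv_X_of_ne hkb.symm, pderiv_C]
  ring

lemma fermatAux_blockdet (a b : Fin N) (c : ℂ) (d : ℕ) (hab : a ≠ b) (hd : 2 ≤ d) :
    pderiv a (X a - C c * X b : MvPolynomial (Fin N) ℂ)
        * pderiv b (∑ l ∈ range d, X a ^ (d-1-l) * C (c^l) * X b ^ l)
      - pderiv b (X a - C c * X b : MvPolynomial (Fin N) ℂ)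
        * pderiv a (∑ l ∈ range d, X a ^ (d-1-l) * C (c^l) * X b ^ l)
      = C ((d : ℂ) * c) * ∑ l ∈ range (d-1), X a ^ (d-2-l) * C (c^l) * X b ^ l := by
  rw [fermatAux_pd_F a b a c hab, fermatAux_pd_F a b b c hab,
    fermatAux_pd_G_a a b c d hab, fermatAux_pd_G_b a b c d hab]
  rw [if_pos rfl, if_neg hab, if_neg hab.symm, if_pos rfl]
  have hck : ∀ l : ℕ, (C (c ^ l) : MvPolynomial (Fin N) ℂ) = (C c) ^ l := fun l => by
    rw [map_pow]
  simp only [hck, mul_zero, sub_zero, mul_one, one_mul, zero_sub, neg_mul, neg_neg, sub_neg_eq_add]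
  rw [fermatAux_key (X a) (X b) (C c) d hd]
  rw [map_mul, map_natCast]

end aux

theorem fermat_decomposition_and_jacobian (n d : ℕ) (hn : Even n) (hd : 2 ≤ d)
    (ζ : ℂ) (hζ : IsPrimitiveRoot ζ (2 * d))
    (α : ℕ → ℕ)
    (hα : ∀ j ≤ n / 2, Odd (α (2 * j)) ∧ 1 ≤ α (2 * j) ∧ α (2 * j) ≤ 2 * d - 1)
    (f g : ℕ → MvPolynomial (Fin (n + 2)) ℂ)
    (hf : ∀ j, f j = X ((2 * j : ℕ) : Fin (n + 2)) -
      C (ζ ^ α (2 * j)) * X ((2 * j + 1 : ℕ) : Fin (n + 2)))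
    (hg : ∀ j, g j = ∑ l ∈ Finset.range d,
      (X ((2 * j : ℕ) : Fin (n + 2))) ^ (d - 1 - l) * C (ζ ^ (α (2 * j) * l)) *
        (X ((2 * j + 1 : ℕ) : Fin (n + 2))) ^ l)
    (H : Fin (n + 2) → MvPolynomial (Fin (n + 2)) ℂ)
    (hH : ∀ k : Fin (n + 2),
      H k = if (k : ℕ) % 2 = 0 then f ((k : ℕ) / 2) else g ((k : ℕ) / 2)) :
    (∑ j ∈ Finset.range (n / 2 + 1), f j * g j =
        ∑ k : Fin (n + 2), (X k : MvPolynomial (Fin (n + 2)) ℂ) ^ d) ∧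
      (jacMatrix H).det =
        C ((d : ℂ) ^ (n / 2 + 1) * ζ ^ (∑ j ∈ Finset.range (n / 2 + 1), α (2 * j))) *
          ∏ j ∈ Finset.range (n / 2 + 1), ∑ l ∈ Finset.range (d - 1),
            (X ((2 * j : ℕ) : Fin (n + 2))) ^ (d - 2 - l) * C (ζ ^ (α (2 * j) * l)) *
              (X ((2 * j + 1 : ℕ) : Fin (n + 2))) ^ l := by
  have hn2 : n % 2 = 0 := Nat.even_iff.mp hn
  set m := n / 2 + 1 with hm_def
  have hm : m * 2 = n + 2 := by omega
  set e : Fin m × Fin 2 ≃ Fin (n + 2) := finProdFinEquiv.trans (finCongr hm) with he_def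
  have he : ∀ (j : Fin m) (i : Fin 2), ((e (j, i)) : ℕ) = 2 * (j : ℕ) + (i : ℕ) := by
    intro j i
    simp only [he_def, Equiv.trans_apply, finCongr_apply, Fin.coe_cast,
      finProdFinEquiv_apply_val]
    omega
  have hjlt : ∀ j : Fin m, 2 * (j : ℕ) + 1 < n + 2 := fun j => by have := j.2; omega
  have hc0 : ∀ j : Fin m, ((2 * (j : ℕ) : ℕ) : Fin (n + 2)) = e (j, 0) := by
    intro j
    apply Fin.ext
    rw [Fin.val_cast_of_lt (by have := hjlt j; omega), he]
    simp
  have hc1 : ∀ j : Fin m, ((2 * (j : ℕ) + 1 : ℕ) : Fin (n + 2)) = e (j, 1) := by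
    intro j
    apply Fin.ext
    rw [Fin.val_cast_of_lt (hjlt j), he]
    simp
  have hab : ∀ j : Fin m, e (j, 0) ≠ e (j, 1) := by
    intro j h
    have h0 := he j 0
    rw [h] at h0
    rw [he j 1] at h0
    simp at h0
  have hHf : ∀ j : Fin m, H (e (j, 0)) = f (j : ℕ) := by
    intro j
    rw [hH (e (j, 0)), he]
    simp only [Fin.val_zero, Nat.add_zero]
    rw [if_pos (by omega)]
    congr 1
    omega
  have hHg : ∀ j : Fin m, H (e (j, 1)) = g (j : ℕ) := by
    intro j
    rw [hH (e (j, 1)), he]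
    simp only [Fin.val_one]
    rw [if_neg (by omega)]
    congr 1
    omega
  -- rewrite f and g in terms of e
  have hf' : ∀ j : Fin m, f (j : ℕ) = X (e (j, 0)) - C (ζ ^ α (2 * (j:ℕ))) * X (e (j, 1)) := by
    intro j
    rw [hf, hc0, hc1]
  have hg' : ∀ j : Fin m, g (j : ℕ) = ∑ l ∈ Finset.range d,
      X (e (j, 0)) ^ (d - 1 - l) * C ((ζ ^ α (2 * (j:ℕ))) ^ l) * X (e (j, 1)) ^ l := by
    intro j
    rw [hg, hc0, hc1]
    exact Finset.sum_congr rfl fun l _ => by rw [← pow_mul]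
  -- ζ ^ d = -1
  have hζd : ζ ^ d = -1 := by
    have h2 : ζ ^ d * ζ ^ d = 1 := by
      rw [← pow_add]
      have : d + d = 2 * d := by ring
      rw [this, hζ.pow_eq_one]
    have hne : ζ ^ d ≠ 1 := hζ.pow_ne_one_of_pos_of_lt (by omega) (by omega)
    rcases mul_self_eq_one_iff.mp h2 with h | h
    · exact absurd h hne
    · exact h
  constructor
  · -- part (a)
    have hfg : ∀ j : Fin m, f (j:ℕ) * g (j:ℕ) = X (e (j,0)) ^ d + X (e (j,1)) ^ d := by
      intro j
      rw [hf' j, hg' j]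
      have hgg : (∑ l ∈ Finset.range d, X (e (j,0)) ^ (d-1-l)
            * C ((ζ ^ α (2*(j:ℕ))) ^ l) * X (e (j,1)) ^ l)
          = ∑ l ∈ Finset.range d, X (e (j,0)) ^ (d-1-l)
            * (C (ζ ^ α (2*(j:ℕ))) : MvPolynomial (Fin (n+2)) ℂ) ^ l * X (e (j,1)) ^ l :=
        Finset.sum_congr rfl fun l _ => by rw [map_pow]
      rw [hgg, fermatAux_telescope]
      have hodd : Odd (α (2 * (j:ℕ))) := (hα (j:ℕ) (by have := j.2; omega)).1
      have h1 : (ζ ^ α (2 * (j:ℕ))) ^ d = -1 := by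
        rw [← pow_mul, mul_comm, pow_mul, hζd, hodd.neg_one_pow]
      have hCd : (C (ζ ^ α (2*(j:ℕ))) : MvPolynomial (Fin (n+2)) ℂ) ^ d = C (-1) := by
        rw [← map_pow, h1]
      rw [hCd, map_neg, map_one]
      ring
    rw [Finset.sum_range fun j => f j * g j]
    rw [Finset.sum_congr rfl fun j _ => hfg j]
    rw [← Equiv.sum_comp e (fun k => (X k : MvPolynomial (Fin (n + 2)) ℂ) ^ d)]
    rw [Fintype.sum_prod_type]
    exact Finset.sum_congr rfl fun j _ => by rw [Fin.sum_univ_two]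
  · -- part (b)
    set e₂ : Fin 2 × Fin m ≃ Fin (n + 2) := (Equiv.prodComm _ _).trans e with he₂_def
    set B : Fin m → Matrix (Fin 2) (Fin 2) (MvPolynomial (Fin (n + 2)) ℂ) :=
      fun j i i' => pderiv (e (j, i')) (H (e (j, i))) with hB_def
    have hJ : jacMatrix H = (Matrix.blockDiagonal B).submatrix e₂.symm e₂.symm := by
      refine Matrix.ext fun k k' => ?_
      obtain ⟨⟨i, j⟩, rfl⟩ := e₂.surjective k
      obtain ⟨⟨i', j'⟩, rfl⟩ := e₂.surjective k'
      simp only [Matrix.submatrix_apply, Equiv.symm_apply_apply, Matrix.blockDiagonal_apply]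
      by_cases hjj : j = j'
      · subst hjj
        rw [if_pos rfl]
        rfl
      · rw [if_neg hjj]
        have hka : e (j', i') ≠ e (j, 0) := fun h =>
          hjj (congrArg Prod.fst (e.injective h)).symm
        have hkb : e (j', i') ≠ e (j, 1) := fun h =>
          hjj (congrArg Prod.fst (e.injective h)).symm
        show pderiv (e (j', i')) (H (e (j, i))) = 0
        fin_cases i
        · show pderiv (e (j', i')) (H (e (j, 0))) = 0
          rw [hHf j, hf' j, fermatAux_pd_F _ _ _ _ (hab j), if_neg hka, if_neg hkb]
          ring
        · show pderiv (e (j', i')) (H (e (j, 1))) = 0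
          rw [hHg j, hg' j, fermatAux_pd_G_ne _ _ _ _ _ hka hkb]
    rw [hJ, Matrix.det_submatrix_equiv_self, Matrix.det_blockDiagonal]
    have hdet : ∀ j : Fin m, (B j).det =
        C ((d : ℂ) * ζ ^ α (2 * (j:ℕ))) * ∑ l ∈ Finset.range (d-1),
          X (e (j,0)) ^ (d-2-l) * C ((ζ ^ α (2 * (j:ℕ))) ^ l) * X (e (j,1)) ^ l := by
      intro j
      rw [Matrix.det_fin_two]
      show pderiv (e (j,0)) (H (e (j,0))) * pderiv (e (j,1)) (H (e (j,1)))
          - pderiv (e (j,1)) (H (e (j,0))) * pderiv (e (j,0)) (H (e (j,1))) = _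
      rw [hHf, hHg, hf', hg']
      exact fermatAux_blockdet (e (j,0)) (e (j,1)) (ζ ^ α (2 * (j:ℕ))) d (hab j) hd
    rw [Finset.prod_congr rfl (fun j _ => hdet j), Finset.prod_mul_distrib,
      ← map_prod]
    congr 1
    · congr 1
      rw [Finset.prod_mul_distrib, Finset.prod_const, Finset.card_univ, Fintype.card_fin,
        Finset.prod_pow_eq_pow_sum]
      congr 2
      exact Fin.sum_univ_eq_sum_range (fun t => α (2 * t)) m
    · refine Eq.trans ?_ (Fin.prod_univ_eq_prod_range
        (fun jn => ∑ l ∈ Finset.range (d - 1),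
          (X ((2 * jn : ℕ) : Fin (n + 2)) : MvPolynomial (Fin (n + 2)) ℂ) ^ (d - 2 - l)
            * C (ζ ^ (α (2 * jn) * l)) * (X ((2 * jn + 1 : ℕ) : Fin (n + 2))) ^ l) m)
      apply Finset.prod_congr rfl
      intro j _
      rw [hc0, hc1]
      exact Finset.sum_congr rfl fun l _ => by rw [← pow_mul]
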